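/- Under the stated hypotheses, for all indices 1 ≤ i, j ≤ n−1 with |i−j| > 1, the commuting braid relations σ_i σ_j = σ_j σ_i, τ_i τ_j = τ_j τ_i, and σ_i τ_j = τ_j σ_i hold in M. -/
import Mathlib


namespace VSBpaper

/-- `ascV v a b = v a * v (a+1) * ⋯ * v b` (equal to `1` when `b < a`). -/
def ascV {M : Type*} [Monoid M] (v : ℕ → M) (a b : ℕ) : M :=
  ((List.range' a (b + 1 - a)).map v).prod

/-- `descV v a b = v b * v (b-1) * ⋯ * v a` (equal to `1` when `b < a`). -/
def descV {M : Type*} [Monoid M] (v : ℕ → M) (a b : ℕ) : M :=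
  (((List.range' a (b + 1 - a)).map v).reverse).prod

section Helpers

variable {M : Type*} [Monoid M]

private lemma descV_single (v : ℕ → M) (a : ℕ) : descV v a a = v a := by
  simp [descV, Nat.add_sub_cancel_left]

private lemma ascV_single (v : ℕ → M) (a : ℕ) : ascV v a a = v a := by
  simp [ascV, Nat.add_sub_cancel_left]

private lemma descV_succ (v : ℕ → M) {a b : ℕ} (h : a ≤ b + 1) :
    descV v a (b + 1) = v (b + 1) * descV v a b := by
  unfold descV
  have h1 : b + 1 + 1 - a = (b + 1 - a) + 1 := by omega
  have h2 : a + (b + 1 - a) = b + 1 := by omega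
  rw [h1, List.range'_concat, List.map_append, List.reverse_append, List.prod_append]
  simp [h2]

private lemma ascV_succ (v : ℕ → M) {a b : ℕ} (h : a ≤ b + 1) :
    ascV v a (b + 1) = ascV v a b * v (b + 1) := by
  unfold ascV
  have h1 : b + 1 + 1 - a = (b + 1 - a) + 1 := by omega
  have h2 : a + (b + 1 - a) = b + 1 := by omega
  rw [h1, List.range'_concat, List.map_append, List.prod_append]
  simp [h2]

private lemma commute_descV (v : ℕ → M) (x : M) (a b : ℕ)
    (h : ∀ k, a ≤ k → k ≤ b → Commute x (v k)) : Commute x (descV v a b) := by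
  unfold descV
  apply Commute.list_prod_right
  intro y hy
  simp only [List.mem_reverse, List.mem_map] at hy
  obtain ⟨k, hk, rfl⟩ := hy
  rw [List.mem_range'_1] at hk
  exact h k (by omega) (by omega)

private lemma commute_ascV (v : ℕ → M) (x : M) (a b : ℕ)
    (h : ∀ k, a ≤ k → k ≤ b → Commute x (v k)) : Commute x (ascV v a b) := by
  unfold ascV
  apply Commute.list_prod_right
  intro y hy
  simp only [List.mem_map] at hy
  obtain ⟨k, hk, rfl⟩ := hy
  rw [List.mem_range'_1] at hk
  exact h k (by omega) (by omega)

private lemma commute_of_eq {a b : M} (h : a * b = b * a) : Commute a b := h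

private lemma comm_ext {p q : M} (h : p * q = q * p) :
    ∀ x : M, p * (q * x) = q * (p * x) := fun x => by rw [← mul_assoc, h, mul_assoc]

private lemma sq_ext {p : M} (h : p * p = 1) :
    ∀ x : M, p * (p * x) = x := fun x => by rw [← mul_assoc, h, one_mul]

private lemma braid_ext {p q : M} (h : p * q * p = q * p * q) :
    ∀ x : M, p * (q * (p * x)) = q * (p * (q * x)) := fun x => by
  rw [← mul_assoc, ← mul_assoc, h, mul_assoc, mul_assoc]

private lemma rec_of_def (n : ℕ) (v : ℕ → M)
    (hvcomm : ∀ i j : ℕ, 1 ≤ i → i ≤ n - 1 → 1 ≤ j → j ≤ n - 1 → (i + 1 < j ∨ j + 1 < i) →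
      v i * v j = v j * v i)
    (x : M) (xs : ℕ → M) (hx1 : xs 1 = x)
    (hdef : ∀ i : ℕ, 1 ≤ i → i ≤ n - 2 →
      xs (i + 1) = descV v 1 i * descV v 2 (i + 1) * x * ascV v 2 (i + 1) * ascV v 1 i) :
    ∀ j, 1 ≤ j → j ≤ n - 2 →
      xs (j + 1) = v j * v (j + 1) * xs j * v (j + 1) * v j := by
  intro j hj hjn
  by_cases hj1 : j = 1
  · subst hj1
    rw [hdef 1 (by omega) (by omega), hx1, descV_single, descV_single, ascV_single, ascV_single]
  · obtain ⟨m, rfl⟩ : ∃ m, j = m + 2 := ⟨j - 2, by omega⟩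
    have hm3 : m + 2 + 1 = m + 3 := rfl
    have hd3 : xs (m + 3) =
        descV v 1 (m + 2) * descV v 2 (m + 3) * x * ascV v 2 (m + 3) * ascV v 1 (m + 2) :=
      hdef (m + 2) (by omega) (by omega)
    have hd2 : xs (m + 2) =
        descV v 1 (m + 1) * descV v 2 (m + 2) * x * ascV v 2 (m + 2) * ascV v 1 (m + 1) :=
      hdef (m + 1) (by omega) (by omega)
    have e1 : descV v 1 (m + 2) = v (m + 2) * descV v 1 (m + 1) := descV_succ v (by omega)
    have e2 : descV v 2 (m + 3) = v (m + 3) * descV v 2 (m + 2) := descV_succ v (by omega)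
    have e3 : ascV v 2 (m + 3) = ascV v 2 (m + 2) * v (m + 3) := ascV_succ v (by omega)
    have e4 : ascV v 1 (m + 2) = ascV v 1 (m + 1) * v (m + 2) := ascV_succ v (by omega)
    have c1 : Commute (v (m + 3)) (descV v 1 (m + 1)) := by
      apply commute_descV
      intro k hk1 hk2
      exact commute_of_eq (hvcomm (m + 3) k (by omega) (by omega) (by omega) (by omega) (by omega))
    have c2 : Commute (v (m + 3)) (ascV v 1 (m + 1)) := by
      apply commute_ascV
      intro k hk1 hk2
      exact commute_of_eq (hvcomm (m + 3) k (by omega) (by omega) (by omega) (by omega) (by omega))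
    rw [hm3, hd3, hd2, e1, e2, e3, e4]
    simp only [mul_assoc]
    rw [comm_ext c1.symm.eq, comm_ext c2.eq]

private lemma lemE (n : ℕ) (v : ℕ → M)
    (hvcomm : ∀ i j : ℕ, 1 ≤ i → i ≤ n - 1 → 1 ≤ j → j ≤ n - 1 → (i + 1 < j ∨ j + 1 < i) →
      v i * v j = v j * v i)
    (xs : ℕ → M)
    (hrec : ∀ j, 1 ≤ j → j ≤ n - 2 →
      xs (j + 1) = v j * v (j + 1) * xs j * v (j + 1) * v j)
    (hx1v : ∀ k, 3 ≤ k → k ≤ n - 1 → Commute (v k) (xs 1)) :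
    ∀ i, 1 ≤ i → ∀ k, i + 2 ≤ k → k ≤ n - 1 → Commute (v k) (xs i) := by
  intro i hi
  induction i, hi using Nat.le_induction with
  | base => exact fun k hk hkn => hx1v k (by omega) hkn
  | succ i hi ih =>
    intro k hk hkn
    rw [hrec i hi (by omega)]
    have cvi : Commute (v k) (v i) :=
      commute_of_eq (hvcomm k i (by omega) hkn (by omega) (by omega) (by omega))
    have cvi1 : Commute (v k) (v (i + 1)) :=
      commute_of_eq (hvcomm k (i + 1) (by omega) hkn (by omega) (by omega) (by omega))
    have cxs : Commute (v k) (xs i) := ih k (by omega) hkn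
    exact (((cvi.mul_right cvi1).mul_right cxs).mul_right cvi1).mul_right cvi

private lemma lemH (n : ℕ) (v : ℕ → M)
    (hvbraid : ∀ i j : ℕ, 1 ≤ i → i ≤ n - 1 → 1 ≤ j → j ≤ n - 1 → (i + 1 = j ∨ j + 1 = i) →
      v i * v j * v i = v j * v i * v j)
    (hvcomm : ∀ i j : ℕ, 1 ≤ i → i ≤ n - 1 → 1 ≤ j → j ≤ n - 1 → (i + 1 < j ∨ j + 1 < i) →
      v i * v j = v j * v i)
    (xs : ℕ → M)
    (hrec : ∀ j, 1 ≤ j → j ≤ n - 2 →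
      xs (j + 1) = v j * v (j + 1) * xs j * v (j + 1) * v j)
    (hx1v : ∀ k, 3 ≤ k → k ≤ n - 1 → Commute (v k) (xs 1)) :
    ∀ m, m + 3 ≤ n - 1 → Commute (v (m + 1)) (xs (m + 3)) := by
  intro m hm
  have h1 : xs (m + 3) = v (m + 2) * v (m + 3) * xs (m + 2) * v (m + 3) * v (m + 2) :=
    hrec (m + 2) (by omega) (by omega)
  have h2 : xs (m + 2) = v (m + 1) * v (m + 2) * xs (m + 1) * v (m + 2) * v (m + 1) :=
    hrec (m + 1) (by omega) (by omega)
  have hca : ∀ x : M, v (m + 3) * (v (m + 1) * x) = v (m + 1) * (v (m + 3) * x) :=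
    comm_ext (hvcomm (m + 3) (m + 1) (by omega) (by omega) (by omega) (by omega) (by omega))
  have hab : ∀ x : M, v (m + 1) * (v (m + 2) * (v (m + 1) * x))
      = v (m + 2) * (v (m + 1) * (v (m + 2) * x)) :=
    braid_ext (hvbraid (m + 1) (m + 2) (by omega) (by omega) (by omega) (by omega) (by omega))
  have hbc : ∀ x : M, v (m + 2) * (v (m + 3) * (v (m + 2) * x))
      = v (m + 3) * (v (m + 2) * (v (m + 3) * x)) :=
    braid_ext (hvbraid (m + 2) (m + 3) (by omega) (by omega) (by omega) (by omega) (by omega))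
  have hcs : ∀ x : M, v (m + 3) * (xs (m + 1) * x) = xs (m + 1) * (v (m + 3) * x) :=
    comm_ext (lemE n v hvcomm xs hrec hx1v (m + 1) (by omega) (m + 3) (by omega) (by omega)).eq
  have W1 : ∀ x : M, v (m+1) * (v (m+2) * (v (m+3) * (v (m+1) * (v (m+2) * x))))
      = v (m+2) * (v (m+3) * (v (m+1) * (v (m+2) * (v (m+3) * x)))) := fun x => by
    rw [hca, hab, hbc, ← hca]
  have W2 : ∀ x : M, v (m+3) * (v (m+2) * (v (m+1) * (v (m+3) * (v (m+2) * x))))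
      = v (m+2) * (v (m+1) * (v (m+3) * (v (m+2) * (v (m+1) * x)))) := fun x => by
    rw [← hca, ← hbc, ← hab, hca]
  have key : ∀ x : M,
      v (m+1) * (v (m+2) * (v (m+3) * (v (m+1) * (v (m+2) * (xs (m+1) *
        (v (m+2) * (v (m+1) * (v (m+3) * (v (m+2) * x)))))))))
      = v (m+2) * (v (m+3) * (v (m+1) * (v (m+2) * (xs (m+1) *
        (v (m+2) * (v (m+1) * (v (m+3) * (v (m+2) * (v (m+1) * x))))))))) := fun x => by
    rw [W1, hcs, W2]
  refine commute_of_eq ?_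
  rw [h1, h2]
  have key1 := key 1
  simp only [mul_one] at key1
  simp only [mul_assoc]
  exact key1
private lemma lemF (n : ℕ) (v : ℕ → M)
    (hvbraid : ∀ i j : ℕ, 1 ≤ i → i ≤ n - 1 → 1 ≤ j → j ≤ n - 1 → (i + 1 = j ∨ j + 1 = i) →
      v i * v j * v i = v j * v i * v j)
    (hvcomm : ∀ i j : ℕ, 1 ≤ i → i ≤ n - 1 → 1 ≤ j → j ≤ n - 1 → (i + 1 < j ∨ j + 1 < i) →
      v i * v j = v j * v i)
    (xs : ℕ → M)
    (hrec : ∀ j, 1 ≤ j → j ≤ n - 2 →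
      xs (j + 1) = v j * v (j + 1) * xs j * v (j + 1) * v j)
    (hx1v : ∀ k, 3 ≤ k → k ≤ n - 1 → Commute (v k) (xs 1)) :
    ∀ k j, 1 ≤ k → k + 2 ≤ j → j ≤ n - 1 → Commute (v k) (xs j) := by
  intro k j hk hkj
  induction j, hkj using Nat.le_induction with
  | base =>
    intro hjn
    obtain ⟨m, rfl⟩ : ∃ m, k = m + 1 := ⟨k - 1, by omega⟩
    exact lemH n v hvbraid hvcomm xs hrec hx1v m (by omega)
  | succ j hj ih =>
    intro hjn
    rw [hrec j (by omega) (by omega)]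
    have c1 : Commute (v k) (v j) :=
      commute_of_eq (hvcomm k j (by omega) (by omega) (by omega) (by omega) (by omega))
    have c2 : Commute (v k) (v (j + 1)) :=
      commute_of_eq (hvcomm k (j + 1) (by omega) (by omega) (by omega) (by omega) (by omega))
    have c3 := ih (by omega)
    exact (((c1.mul_right c2).mul_right c3).mul_right c2).mul_right c1

private lemma lemG (n : ℕ) (v : ℕ → M)
    (hvbraid : ∀ i j : ℕ, 1 ≤ i → i ≤ n - 1 → 1 ≤ j → j ≤ n - 1 → (i + 1 = j ∨ j + 1 = i) →
      v i * v j * v i = v j * v i * v j)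
    (hvcomm : ∀ i j : ℕ, 1 ≤ i → i ≤ n - 1 → 1 ≤ j → j ≤ n - 1 → (i + 1 < j ∨ j + 1 < i) →
      v i * v j = v j * v i)
    (xs ys : ℕ → M)
    (hrecx : ∀ j, 1 ≤ j → j ≤ n - 2 →
      xs (j + 1) = v j * v (j + 1) * xs j * v (j + 1) * v j)
    (hrecy : ∀ j, 1 ≤ j → j ≤ n - 2 →
      ys (j + 1) = v j * v (j + 1) * ys j * v (j + 1) * v j)
    (hx1v : ∀ k, 3 ≤ k → k ≤ n - 1 → Commute (v k) (xs 1))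
    (hy1v : ∀ k, 3 ≤ k → k ≤ n - 1 → Commute (v k) (ys 1))
    (base : Commute (xs 1) (ys 3)) :
    ∀ i, 1 ≤ i → ∀ j, i + 2 ≤ j → j ≤ n - 1 → Commute (xs i) (ys j) := by
  have G1 : ∀ j, 3 ≤ j → j ≤ n - 1 → Commute (xs 1) (ys j) := by
    intro j hj
    induction j, hj using Nat.le_induction with
    | base => exact fun _ => base
    | succ j hj ih =>
      intro hjn
      rw [hrecy j (by omega) (by omega)]
      have c1 : Commute (xs 1) (v j) := (hx1v j (by omega) (by omega)).symm
      have c2 : Commute (xs 1) (v (j + 1)) := (hx1v (j + 1) (by omega) (by omega)).symm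
      have c3 := ih (by omega)
      exact (((c1.mul_right c2).mul_right c3).mul_right c2).mul_right c1
  intro i hi
  induction i, hi using Nat.le_induction with
  | base => exact fun j hj hjn => G1 j (by omega) hjn
  | succ i hi ih =>
    intro j hij hjn
    rw [hrecx i hi (by omega)]
    have c1 : Commute (v i) (ys j) :=
      lemF n v hvbraid hvcomm ys hrecy hy1v i j hi (by omega) hjn
    have c2 : Commute (v (i + 1)) (ys j) :=
      lemF n v hvbraid hvcomm ys hrecy hy1v (i + 1) j (by omega) (by omega) hjn
    have c3 := ih j (by omega) hjn
    exact (((c1.mul_left c2).mul_left c3).mul_left c2).mul_left c1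

end Helpers

/-- **Lemma 4.3.** For all `1 ≤ i, j ≤ n-1` with `|i-j| > 1`, the commuting braid relations `σ_i σ_j = σ_j σ_i`, `τ_i τ_j = τ_j τ_i` and `σ_i τ_j = τ_j σ_i` hold in `M`. -/
theorem far_commuting_braid_relations {M : Type*} [Monoid M] (n : ℕ) (hn : 2 ≤ n) (v : ℕ → M)
    (hvbraid : ∀ i j : ℕ, 1 ≤ i → i ≤ n - 1 → 1 ≤ j → j ≤ n - 1 → (i + 1 = j ∨ j + 1 = i) →
      v i * v j * v i = v j * v i * v j)
    (hvcomm : ∀ i j : ℕ, 1 ≤ i → i ≤ n - 1 → 1 ≤ j → j ≤ n - 1 → (i + 1 < j ∨ j + 1 < i) →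
      v i * v j = v j * v i)
    (hvsq : ∀ i : ℕ, 1 ≤ i → i ≤ n - 1 → v i * v i = 1)
    (σ σ' τ : M)
    (hcomm_στ : σ * τ = τ * σ)
    (hinv : σ * σ' = 1) (hinv' : σ' * σ = 1)
    (hτv : ∀ i : ℕ, 3 ≤ i → i ≤ n - 1 → τ * v i = v i * τ)
    (hσv : ∀ i : ℕ, 3 ≤ i → i ≤ n - 1 → σ * v i = v i * σ)
    (hbraid_base : 2 ≤ n - 1 →
      σ * (v 1 * v 2 * σ * v 2 * v 1) * σ =
        (v 1 * v 2 * σ * v 2 * v 1) * σ * (v 1 * v 2 * σ * v 2 * v 1))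
    (hmixed_base : 2 ≤ n - 1 →
      τ * (v 1 * v 2 * σ * v 2 * v 1) * σ =
        (v 1 * v 2 * σ * v 2 * v 1) * σ * (v 1 * v 2 * τ * v 2 * v 1))
    (hfar_σσ : 3 ≤ n - 1 →
      σ * (v 2 * v 3 * v 1 * v 2 * σ * v 2 * v 1 * v 3 * v 2) =
        (v 2 * v 3 * v 1 * v 2 * σ * v 2 * v 1 * v 3 * v 2) * σ)
    (hfar_τσ : 3 ≤ n - 1 →
      τ * (v 2 * v 3 * v 1 * v 2 * σ * v 2 * v 1 * v 3 * v 2) =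
        (v 2 * v 3 * v 1 * v 2 * σ * v 2 * v 1 * v 3 * v 2) * τ)
    (hfar_ττ : 3 ≤ n - 1 →
      τ * (v 2 * v 3 * v 1 * v 2 * τ * v 2 * v 1 * v 3 * v 2) =
        (v 2 * v 3 * v 1 * v 2 * τ * v 2 * v 1 * v 3 * v 2) * τ)
    (σs σs' τs : ℕ → M)
    (hσ1 : σs 1 = σ) (hσ'1 : σs' 1 = σ') (hτ1 : τs 1 = τ)
    (hσdef : ∀ i : ℕ, 1 ≤ i → i ≤ n - 2 →
      σs (i + 1) = descV v 1 i * descV v 2 (i + 1) * σ * ascV v 2 (i + 1) * ascV v 1 i)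
    (hσ'def : ∀ i : ℕ, 1 ≤ i → i ≤ n - 2 →
      σs' (i + 1) = descV v 1 i * descV v 2 (i + 1) * σ' * ascV v 2 (i + 1) * ascV v 1 i)
    (hτdef : ∀ i : ℕ, 1 ≤ i → i ≤ n - 2 →
      τs (i + 1) = descV v 1 i * descV v 2 (i + 1) * τ * ascV v 2 (i + 1) * ascV v 1 i) :
    ∀ i j : ℕ, 1 ≤ i → i ≤ n - 1 → 1 ≤ j → j ≤ n - 1 → (i + 1 < j ∨ j + 1 < i) →
      σs i * σs j = σs j * σs i ∧ τs i * τs j = τs j * τs i ∧ σs i * τs j = τs j * σs i := by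
  intro i j hi1 hin hj1 hjn hfar
  have h3n : 3 ≤ n - 1 := by omega
  -- recursions
  have hrecσ := rec_of_def n v hvcomm σ σs hσ1 hσdef
  have hrecτ := rec_of_def n v hvcomm τ τs hτ1 hτdef
  -- commutation of the base elements with far generators
  have hσ1v : ∀ k, 3 ≤ k → k ≤ n - 1 → Commute (v k) (σs 1) := fun k h3 hk => by
    rw [hσ1]; exact commute_of_eq (hσv k h3 hk).symm
  have hτ1v : ∀ k, 3 ≤ k → k ≤ n - 1 → Commute (v k) (τs 1) := fun k h3 hk => by
    rw [hτ1]; exact commute_of_eq (hτv k h3 hk).symm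
  -- basic letter facts
  have h13' : ∀ x : M, v 1 * (v 3 * x) = v 3 * (v 1 * x) :=
    comm_ext (hvcomm 1 3 (by omega) (by omega) (by omega) (by omega) (by omega))
  have hsq1' := sq_ext (hvsq 1 (by omega) (by omega))
  have hsq2' := sq_ext (hvsq 2 (by omega) (by omega))
  have hsq3' := sq_ext (hvsq 3 (by omega) h3n)
  have hPP' : ∀ x : M,
      v 2 * (v 3 * (v 1 * (v 2 * (v 2 * (v 3 * (v 1 * (v 2 * x))))))) = x := fun x => by
    rw [hsq2', h13', hsq3', hsq1', hsq2']
  -- normal forms of σs 3 and τs 3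
  have hd3σ : σs 3 = descV v 1 2 * descV v 2 3 * σ * ascV v 2 3 * ascV v 1 2 :=
    hσdef 2 (by omega) (by omega)
  have hd3τ : τs 3 = descV v 1 2 * descV v 2 3 * τ * ascV v 2 3 * ascV v 1 2 :=
    hτdef 2 (by omega) (by omega)
  have e1 : descV v 1 2 = v 2 * descV v 1 1 := descV_succ v (by omega)
  have e2 : descV v 2 3 = v 3 * descV v 2 2 := descV_succ v (by omega)
  have e3 : ascV v 2 3 = ascV v 2 2 * v 3 := ascV_succ v (by omega)
  have e4 : ascV v 1 2 = ascV v 1 1 * v 2 := ascV_succ v (by omega)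
  have σs3P : σs 3 = v 2 * (v 3 * (v 1 * (v 2 * (σ * (v 2 * (v 3 * (v 1 * v 2))))))) := by
    rw [hd3σ, e1, e2, e3, e4, descV_single, descV_single, ascV_single, ascV_single]
    simp only [mul_assoc]
    rw [h13']
  have τs3P : τs 3 = v 2 * (v 3 * (v 1 * (v 2 * (τ * (v 2 * (v 3 * (v 1 * v 2))))))) := by
    rw [hd3τ, e1, e2, e3, e4, descV_single, descV_single, ascV_single, ascV_single]
    simp only [mul_assoc]
    rw [h13']
  -- the four base commutations
  have cσσ3 : Commute (σs 1) (σs 3) := by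
    refine commute_of_eq ?_
    rw [hσ1, σs3P]
    have h := hfar_σσ h3n
    simp only [mul_assoc] at h ⊢
    simp only [h13'] at h
    exact h
  have cττ3 : Commute (τs 1) (τs 3) := by
    refine commute_of_eq ?_
    rw [hτ1, τs3P]
    have h := hfar_ττ h3n
    simp only [mul_assoc] at h ⊢
    simp only [h13'] at h
    exact h
  have cτσ3 : Commute (τs 1) (σs 3) := by
    refine commute_of_eq ?_
    rw [hτ1, σs3P]
    have h := hfar_τσ h3n
    simp only [mul_assoc] at h ⊢
    simp only [h13'] at h
    exact h
  have cστ3 : Commute (σs 1) (τs 3) := by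
    refine commute_of_eq ?_
    rw [hσ1, τs3P]
    have h := hfar_τσ h3n
    have h' : ∀ x : M,
        τ * (v 2 * v 3 * v 1 * v 2 * σ * v 2 * v 1 * v 3 * v 2) * x
          = (v 2 * v 3 * v 1 * v 2 * σ * v 2 * v 1 * v 3 * v 2) * τ * x := fun x => by rw [h]
    simp only [mul_assoc] at h'
    simp only [h13'] at h'
    have goal' : ∀ x : M,
        σ * (v 2 * (v 3 * (v 1 * (v 2 * (τ * (v 2 * (v 3 * (v 1 * (v 2 * x)))))))))
          = v 2 * (v 3 * (v 1 * (v 2 * (τ * (v 2 * (v 3 * (v 1 * (v 2 * (σ * x))))))))) := by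
      intro x
      rw [← hPP' (σ * (v 2 * (v 3 * (v 1 * (v 2 * (τ * (v 2 * (v 3 * (v 1 * (v 2 * x))))))))))]
      rw [← h']
      rw [hPP']
    have hg := goal' 1
    simp only [mul_one] at hg
    simp only [mul_assoc]
    exact hg
  -- the general far commutations
  have Gσσ := lemG n v hvbraid hvcomm σs σs hrecσ hrecσ hσ1v hσ1v cσσ3
  have Gττ := lemG n v hvbraid hvcomm τs τs hrecτ hrecτ hτ1v hτ1v cττ3
  have Gστ := lemG n v hvbraid hvcomm σs τs hrecσ hrecτ hσ1v hτ1v cστ3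
  have Gτσ := lemG n v hvbraid hvcomm τs σs hrecτ hrecσ hτ1v hσ1v cτσ3
  rcases hfar with hlt | hlt
  · exact ⟨(Gσσ i hi1 j (by omega) hjn).eq, (Gττ i hi1 j (by omega) hjn).eq,
      (Gστ i hi1 j (by omega) hjn).eq⟩
  · exact ⟨((Gσσ j hj1 i (by omega) hin).symm).eq, ((Gττ j hj1 i (by omega) hin).symm).eq,
      ((Gτσ j hj1 i (by omega) hin).eq).symm⟩

end VSBpaper
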